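/- For all n ≥ 0 and k ≥ 1, W_{m,λ}^{(r)}(n+1,k) − (r − nλ) W_{m,λ}^{(r)}(n,k) = Σ_{l=k−1}^{n} C(n,l) (m)_{n−l,λ} W_{m,λ}^{(r)}(l,k−1), where (m)_{j,λ} = m(m−λ)···(m−(j−1)λ). -/

import Mathlib

open Finset Polynomial

/-- generalized falling factorial: (x)_{n,λ} = x(x-λ)···(x-(n-1)λ) -/
def dff (lam x : ℝ) (n : ℕ) : ℝ := ∏ i ∈ Finset.range n, (x - i * lam)

/-- generalized rising factorial: ⟨x⟩_{n,λ} = x(x+λ)···(x+(n-1)λ) -/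
def drf (lam x : ℝ) (n : ℕ) : ℝ := ∏ i ∈ Finset.range n, (x + i * lam)

lemma dff_zero (lam x : ℝ) : dff lam x 0 = 1 := by simp [dff]

lemma dff_succ (lam x : ℝ) (n : ℕ) : dff lam x (n+1) = dff lam x n * (x - n*lam) := by
  simp [dff, Finset.prod_range_succ]

lemma dff_shift (x : ℝ) (n : ℕ) : dff 1 x (n+1) = x * dff 1 (x-1) n := by
  rw [dff, Finset.prod_range_succ']
  simp only [Nat.cast_zero, zero_mul, sub_zero, Nat.cast_add, Nat.cast_one, mul_one]
  rw [mul_comm]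
  congr 1
  apply Finset.prod_congr rfl
  intro i _
  simp [dff]
  ring_nf

lemma dff_eval (x : ℝ) (k : ℕ) : dff 1 x k = (descPochhammer ℝ k).eval x := by
  induction k with
  | zero => simp [dff]
  | succ n ih =>
    rw [dff_succ, descPochhammer_succ_right, ih]
    simp [mul_comm]

/-- coefficient extraction -/
lemma extract_poly : ∀ (N : ℕ) (c : ℕ → ℝ),
    (∑ j ∈ range (N+1), Polynomial.C (c j) * descPochhammer ℝ j) = 0 →
    ∀ k ≤ N, c k = 0 := by
  intro N
  induction N with
  | zero =>
    intro c h k hk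
    interval_cases k
    simpa using h
  | succ N ih =>
    intro c h k hk
    have hlast : c (N+1) = 0 := by
      have := congrArg (fun p => Polynomial.coeff p (N+1)) h
      simp only [Polynomial.finset_sum_coeff, Polynomial.coeff_zero] at this
      rw [Finset.sum_eq_single (N+1)] at this
      · have h1 : (descPochhammer ℝ (N+1)).coeff (N+1) = 1 := by
          have h2 := (monic_descPochhammer ℝ (N+1)).coeff_natDegree
          rwa [descPochhammer_natDegree] at h2
        simpa [Polynomial.coeff_C_mul, h1] using this
      · intro j hj hne
        have hj' : j < N + 1 := by
          rcases Nat.lt_succ_iff_lt_or_eq.mp (Finset.mem_range.mp hj) with h' | h'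
          · omega
          · omega
        rw [Polynomial.coeff_C_mul, Polynomial.coeff_eq_zero_of_natDegree_lt]
        · ring
        · rw [descPochhammer_natDegree]; omega
      · intro hmem; exact absurd (Finset.self_mem_range_succ (N+1)) hmem
    by_cases hk' : k = N + 1
    · rw [hk']; exact hlast
    · apply ih c _ k (by omega)
      rw [Finset.sum_range_succ] at h
      simpa [hlast] using h

lemma extract (N : ℕ) (a b : ℕ → ℝ)
    (h : ∀ x : ℝ, ∑ j ∈ range (N+1), a j * dff 1 x j = ∑ j ∈ range (N+1), b j * dff 1 x j) :
    ∀ k ≤ N, a k = b k := by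
  have hz : ∀ k ≤ N, a k - b k = 0 := by
    apply extract_poly N (fun j => a j - b j)
    apply Polynomial.funext
    intro x
    have := h x
    simp only [Polynomial.eval_finset_sum, Polynomial.eval_mul, Polynomial.eval_C,
      Polynomial.eval_zero, ← dff_eval, sub_mul, Finset.sum_sub_distrib]
    linarith [h x]
  intro k hk
  have := hz k hk
  linarith

lemma dff_add (lam a b : ℝ) (n : ℕ) : dff lam (a+b) n =
    ∑ l ∈ range (n+1), (n.choose l : ℝ) * (dff lam a l * dff lam b (n-l)) := by
  induction n with
  | zero => simp [dff]
  | succ n ih =>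
    have key : ∀ l ∈ range (n+1),
        (n.choose l : ℝ) * (dff lam a l * dff lam b (n-l)) * (a + b - n*lam)
        = (n.choose l : ℝ) * (dff lam a (l+1) * dff lam b (n-l))
          + (n.choose l : ℝ) * (dff lam a l * dff lam b (n-l+1)) := by
      intro l hl
      have hln : l ≤ n := Nat.lt_succ_iff.mp (Finset.mem_range.mp hl)
      have hcast : ((n - l : ℕ) : ℝ) = (n : ℝ) - l := by
        push_cast [hln]; ring
      rw [dff_succ, dff_succ, hcast]
      ring
    rw [dff_succ, ih, Finset.sum_mul, Finset.sum_congr rfl key, Finset.sum_add_distrib]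
    -- target: ... = ∑ l ∈ range (n+2), C(n+1,l) * (dff a l * dff b (n+1-l))
    have htarget : ∑ l ∈ range (n+2), ((n+1).choose l : ℝ) * (dff lam a l * dff lam b (n+1-l))
        = ∑ l ∈ range (n+1), (n.choose l : ℝ) * (dff lam a (l+1) * dff lam b (n-l))
          + ∑ l ∈ range (n+1), (n.choose l : ℝ) * (dff lam a l * dff lam b (n-l+1)) := by
      rw [Finset.sum_range_succ']
      have hsplit : ∀ l ∈ range (n+1),
          (((n+1).choose (l+1) : ℕ) : ℝ) * (dff lam a (l+1) * dff lam b (n+1-(l+1)))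
          = (n.choose l : ℝ) * (dff lam a (l+1) * dff lam b (n-l))
            + (n.choose (l+1) : ℝ) * (dff lam a (l+1) * dff lam b (n-l)) := by
        intro l hl
        have : n + 1 - (l+1) = n - l := by omega
        rw [this, Nat.choose_succ_succ]
        push_cast
        ring
      rw [Finset.sum_congr rfl hsplit, Finset.sum_add_distrib]
      have h2 : ∑ l ∈ range (n+1), (n.choose (l+1) : ℝ) * (dff lam a (l+1) * dff lam b (n-l))
            + ((n+1).choose 0 : ℝ) * (dff lam a 0 * dff lam b (n+1-0))
          = ∑ l ∈ range (n+1), (n.choose l : ℝ) * (dff lam a l * dff lam b (n-l+1)) := by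
        have : ∑ l ∈ range (n+2), (n.choose l : ℝ) * (dff lam a l * dff lam b (n+1-l))
            = ∑ l ∈ range (n+1), (n.choose (l+1) : ℝ) * (dff lam a (l+1) * dff lam b (n+1-(l+1)))
              + (n.choose 0 : ℝ) * (dff lam a 0 * dff lam b (n+1-0)) := Finset.sum_range_succ' _ _
        rw [Finset.sum_range_succ] at this
        simp only [Nat.choose_succ_self, Nat.cast_zero, zero_mul, add_zero] at this
        have heq : ∀ l ∈ range (n+1),
            (n.choose l : ℝ) * (dff lam a l * dff lam b (n+1-l))
            = (n.choose l : ℝ) * (dff lam a l * dff lam b (n-l+1)) := by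
          intro l hl
          have : n + 1 - l = n - l + 1 := by
            have := Nat.lt_succ_iff.mp (Finset.mem_range.mp hl); omega
          rw [this]
        have heq2 : ∀ l ∈ range (n+1),
            (n.choose (l+1) : ℝ) * (dff lam a (l+1) * dff lam b (n+1-(l+1)))
            = (n.choose (l+1) : ℝ) * (dff lam a (l+1) * dff lam b (n-l)) := by
          intro l hl
          have h3 : n + 1 - (l+1) = n - l := by omega
          rw [h3]
        rw [Finset.sum_congr rfl heq, Finset.sum_congr rfl heq2] at this
        simp only [Nat.choose_zero_right, Nat.cast_one] at this ⊢
        linarith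
      linarith
    linarith

theorem stmt19 (m : ℕ) (hm : 0 < m) (r : ℕ) (lam : ℝ) (W : ℕ → ℕ → ℝ)
    (hW : ∀ n : ℕ, ∀ x : ℝ,
      dff lam ((m : ℝ) * x + r) n = ∑ k ∈ range (n + 1), W n k * (m : ℝ) ^ k * dff 1 x k)
    (hzero : ∀ n k : ℕ, n < k → W n k = 0) :
    ∀ n k : ℕ, 1 ≤ k →
      W (n + 1) k - ((r : ℝ) - n * lam) * W n k =
        ∑ l ∈ Finset.Icc (k - 1) n, (n.choose l : ℝ) * dff lam (m : ℝ) (n - l) * W l (k - 1) := by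
  intro n k hk
  by_cases hkn : k ≤ n + 1
  case neg =>
    have h1 : W (n+1) k = 0 := hzero _ _ (by omega)
    have h2 : W n k = 0 := hzero _ _ (by omega)
    have h3 : Finset.Icc (k-1) n = ∅ := Finset.Icc_eq_empty (by omega)
    simp [h1, h2, h3]
  case pos =>
    set c : ℕ → ℝ := fun j => if j = 0 then 0 else
      (∑ l ∈ range (n+1), (n.choose l : ℝ) * dff lam (m:ℝ) (n-l) * W l (j-1)) * (m:ℝ)^j
      with hc
    have key : ∀ x : ℝ,
        ∑ j ∈ range (n+2), (W (n+1) j - ((r:ℝ) - n*lam) * W n j) * (m:ℝ)^j * dff 1 x j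
        = ∑ j ∈ range (n+2), c j * dff 1 x j := by
      intro x
      -- LHS
      have hL : ∑ j ∈ range (n+2), (W (n+1) j - ((r:ℝ) - n*lam) * W n j) * (m:ℝ)^j * dff 1 x j
          = (m:ℝ) * x * dff lam ((m:ℝ)*x + r) n := by
        have e1 : ∑ j ∈ range (n+2), (W (n+1) j - ((r:ℝ) - n*lam) * W n j) * (m:ℝ)^j * dff 1 x j
            = ∑ j ∈ range (n+2), W (n+1) j * (m:ℝ)^j * dff 1 x j
              - ((r:ℝ) - n*lam) * ∑ j ∈ range (n+2), W n j * (m:ℝ)^j * dff 1 x j := by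
          rw [Finset.mul_sum, ← Finset.sum_sub_distrib]
          apply Finset.sum_congr rfl
          intro j _
          ring
        have e2 : ∑ j ∈ range (n+2), W n j * (m:ℝ)^j * dff 1 x j
            = dff lam ((m:ℝ)*x + r) n := by
          rw [Finset.sum_range_succ, hzero n (n+1) (by omega)]
          simp [← hW n x]
        rw [e1, e2, ← hW (n+1) x, dff_succ]
        ring
      -- RHS
      have hR : ∑ j ∈ range (n+2), c j * dff 1 x j
          = (m:ℝ) * x * dff lam ((m:ℝ)*x + r) n := by
        rw [Finset.sum_range_succ']
        have hc0 : c 0 * dff 1 x 0 = 0 := by simp [hc]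
        rw [hc0, add_zero]
        have e3 : ∀ j ∈ range (n+1), c (j+1) * dff 1 x (j+1)
            = ∑ l ∈ range (n+1),
                (n.choose l : ℝ) * dff lam (m:ℝ) (n-l) * (W l j * (m:ℝ)^j * dff 1 (x-1) j)
                * ((m:ℝ) * x) := by
          intro j _
          rw [hc, dff_shift]
          simp only [Nat.add_sub_cancel, if_neg (Nat.succ_ne_zero j)]
          rw [Finset.sum_mul, Finset.sum_mul]
          apply Finset.sum_congr rfl
          intro l _
          rw [pow_succ]
          ring
        rw [Finset.sum_congr rfl e3, Finset.sum_comm]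
        have e4 : ∀ l ∈ range (n+1),
            ∑ j ∈ range (n+1),
              (n.choose l : ℝ) * dff lam (m:ℝ) (n-l) * (W l j * (m:ℝ)^j * dff 1 (x-1) j)
              * ((m:ℝ) * x)
            = (n.choose l : ℝ) * (dff lam ((m:ℝ)*(x-1) + r) l * dff lam (m:ℝ) (n-l))
              * ((m:ℝ) * x) := by
          intro l hl
          have hl' : l ≤ n := Nat.lt_succ_iff.mp (Finset.mem_range.mp hl)
          have e5 : ∑ j ∈ range (n+1), W l j * (m:ℝ)^j * dff 1 (x-1) j
              = dff lam ((m:ℝ)*(x-1) + r) l := by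
            rw [hW l (x-1)]
            apply (Finset.sum_subset _ _).symm
            · intro j hj
              simp only [Finset.mem_range] at hj ⊢
              omega
            · intro j _ hj
              simp only [Finset.mem_range, not_lt] at hj
              rw [hzero l j (by omega)]
              ring
          rw [← e5]
          simp only [Finset.sum_mul, Finset.mul_sum]
          apply Finset.sum_congr rfl
          intro j _
          ring
        rw [Finset.sum_congr rfl e4, ← Finset.sum_mul]
        have e6 : ∑ l ∈ range (n+1),
            (n.choose l : ℝ) * (dff lam ((m:ℝ)*(x-1) + r) l * dff lam (m:ℝ) (n-l))
            = dff lam ((m:ℝ)*x + r) n := by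
          rw [← dff_add]
          congr 1
          ring
        rw [e6]
        ring
      rw [hL, hR]
    have hcoeff := extract (n+1) _ _ key k hkn
    have hmk : (0:ℝ) < (m:ℝ)^k := by positivity
    have hck : c k = (∑ l ∈ range (n+1), (n.choose l : ℝ) * dff lam (m:ℝ) (n-l) * W l (k-1))
        * (m:ℝ)^k := by
      simp only [hc]; rw [if_neg (by omega : ¬ k = 0)]
    rw [hck] at hcoeff
    have hmain : W (n + 1) k - ((r : ℝ) - n * lam) * W n k
        = ∑ l ∈ range (n+1), (n.choose l : ℝ) * dff lam (m:ℝ) (n-l) * W l (k-1) := by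
      have := mul_right_cancel₀ (ne_of_gt hmk) hcoeff
      linarith
    rw [hmain]
    -- convert range sum to Icc sum
    rw [show Finset.Icc (k-1) n = Finset.filter (fun l => k-1 ≤ l) (range (n+1)) by
      ext l; simp [Finset.mem_Icc, Nat.lt_succ_iff, and_comm]]
    rw [Finset.sum_filter]
    apply Finset.sum_congr rfl
    intro l _
    by_cases hlk : k - 1 ≤ l
    · simp [hlk]
    · rw [if_neg hlk, hzero l (k-1) (by omega)]
      ring
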